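/- Let 𝒢 be a class of graphs, let 𝒞 be a class of graphs in which every connected component of every graph has at most s vertices, and suppose that every graph in 𝒢 has a fractional 𝒞-complementary packing of thickness at most 1/3. Then every graph in 𝒢 has maximum degree at most 2s − 2. In particular, every fractionally Vs-fragile class of graphs has bounded maximum degree. -/

import Mathlib

open Classical Filter

attribute [local instance] Classical.propDecidable

noncomputable section

/-- A finite graph, bundled with its (finite) vertex type. -/
structure FGraph : Type 1 where
  V : Type
  [fin : Fintype V]
  G : SimpleGraph V

attribute [instance] FGraph.fin

namespace FGraph

/-- The number of vertices. -/
def card (G : FGraph) : ℕ := Fintype.card G.V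

/-- The number of edges. -/
def edgeCount (G : FGraph) : ℕ := G.G.edgeSet.ncard

/-- The edge density `|E(G)|/|V(G)|`. -/
def density (G : FGraph) : ℝ := (G.edgeCount : ℝ) / (G.card : ℝ)

/-- `G − X`: the subgraph induced by the complement of `X`. -/
def del (G : FGraph) (X : Set G.V) : FGraph := ⟨↥(Xᶜ), G.G.induce (Xᶜ : Set G.V)⟩

/-- `H` is (isomorphic to) a subgraph of `G`. -/
def IsSubgraphOf (H G : FGraph) : Prop :=
  ∃ f : H.V → G.V, Function.Injective f ∧ ∀ a b, H.G.Adj a b → G.G.Adj (f a) (f b)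

/-- The class `C` is closed under taking subgraphs. -/
def SubgraphClosed (C : Set FGraph) : Prop :=
  ∀ G ∈ C, ∀ H : FGraph, IsSubgraphOf H G → H ∈ C

/-- `G` has maximum degree at most `d`. -/
def maxDegLE (G : FGraph) (d : ℕ) : Prop := ∀ v : G.V, (G.G.neighborSet v).ncard ≤ d

/-- The maximum degree of `G`. -/
def maxDeg (G : FGraph) : ℕ := Finset.univ.sup fun v : G.V => (G.G.neighborSet v).ncard

/-- The class `C` has bounded maximum degree. -/
def BddMaxDeg (C : Set FGraph) : Prop := ∃ Δ : ℕ, ∀ G ∈ C, G.maxDegLE Δ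

/-- `H` is a `d`-minor of `G`: obtained by contracting pairwise disjoint subgraphs of
radius at most `d` (the branch sets `B w`) and deleting vertices and edges. -/
def IsMinor (d : ℕ) (H G : FGraph) : Prop :=
  ∃ B : H.V → Set G.V,
    (∀ w, (B w).Nonempty) ∧
    (Pairwise fun w w' => Disjoint (B w) (B w')) ∧
    (∀ w : H.V, ∃ v ∈ B w, ∀ u ∈ B w, ∃ p : G.G.Walk v u,
      p.length ≤ d ∧ ∀ x ∈ p.support, x ∈ B w) ∧
    (∀ w w' : H.V, H.G.Adj w w' → ∃ v ∈ B w, ∃ v' ∈ B w', G.G.Adj v v')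

/-- The complete graph `K_t` as a bundled finite graph. -/
def completeFG (t : ℕ) : FGraph := ⟨Fin t, ⊤⟩

/-- The set of densities of `k`-minors of graphs in the class `C`. -/
def densSet (k : ℕ) (C : Set FGraph) : Set ℝ :=
  {r | ∃ G ∈ C, ∃ H : FGraph, IsMinor k H G ∧ r = H.density}

/-- `∇_k(C)`: the supremum of densities of `k`-minors of graphs in `C`. -/
def nablaClass (k : ℕ) (C : Set FGraph) : ℝ := sSup (densSet k C)

/-- `G` has a balanced separation of size at most `s`. -/
def SepAtMost (G : FGraph) (s : ℕ) : Prop :=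
  ∃ A B : G.G.Subgraph, A ⊔ B = ⊤ ∧ Disjoint A.edgeSet B.edgeSet ∧
    3 * (A.verts \ B.verts).ncard ≤ 2 * G.card ∧
    3 * (B.verts \ A.verts).ncard ≤ 2 * G.card ∧
    (A.verts ∩ B.verts).ncard ≤ s

/-- `s_C(n)`: the smallest `s` such that every graph in `C` with at most `n` vertices
has a balanced separation of size at most `s`. -/
def sepf (C : Set FGraph) (n : ℕ) : ℕ :=
  sInf {s | ∀ G ∈ C, G.card ≤ n → SepAtMost G s}

/-- The class `C` has sublinear separators. -/
def SublinearSep (C : Set FGraph) : Prop :=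
  Tendsto (fun n : ℕ => (sepf C n : ℝ) / (n : ℝ)) atTop (nhds 0)

/-- The class `C` has strongly sublinear separators. -/
def StronglySublinearSep (C : Set FGraph) : Prop :=
  ∃ c δ : ℝ, 1 ≤ c ∧ 0 ≤ δ ∧ δ < 1 ∧ ∀ n : ℕ, (sepf C n : ℝ) ≤ c * (n : ℝ) ^ δ

/-- The number of vertices of the connected component of `v`. -/
def compSize (G : FGraph) (v : G.V) : ℕ := ((G.G.connectedComponentMk v).supp).ncard

/-- `G` has a fractional `C`-complementary packing of thickness at most `ε`. -/
def FracPack (G : FGraph) (C : Set FGraph) (ε : ℝ) : Prop :=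
  ∃ π : Finset G.V → ℝ,
    (∀ X, 0 ≤ π X) ∧
    (∑ X : Finset G.V, π X = 1) ∧
    (∀ X : Finset G.V, π X ≠ 0 → G.del (↑X : Set G.V) ∈ C) ∧
    (∀ v : G.V, ∑ X ∈ Finset.univ.filter (fun X : Finset G.V => v ∈ X), π X ≤ ε)

/-- `C` is an `ε`-witness for the class `Gc`: every graph in `Gc` has a fractional
`C`-complementary packing of thickness at most `ε`. -/
def Witness (C Gc : Set FGraph) (ε : ℝ) : Prop := ∀ G ∈ Gc, FracPack G C ε

/-- `Gc` is fractionally `P`-fragile. -/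
def FracFragile (P : Set (Set FGraph)) (Gc : Set FGraph) : Prop :=
  ∀ ε : ℝ, 0 < ε → ∃ C ∈ P, Witness C Gc ε

/-- The class property `Vs` of all graph classes with bounded component size. -/
def Vs : Set (Set FGraph) := {C | ∃ t : ℕ, ∀ G ∈ C, ∀ v : G.V, G.compSize v ≤ t}

/-- `(T, β)` is a tree decomposition of `G`. -/
def IsTreeDecomp (G : FGraph) {ι : Type} (T : SimpleGraph ι) (β : ι → Set G.V) : Prop :=
  T.IsTree ∧
  (∀ v : G.V, ∃ u, v ∈ β u) ∧
  (∀ v w : G.V, G.G.Adj v w → ∃ u, v ∈ β u ∧ w ∈ β u) ∧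
  (∀ v : G.V, (T.induce {u | v ∈ β u}).Connected)

/-- `G` has treewidth at most `k`. -/
def twLE (G : FGraph) (k : ℕ) : Prop :=
  ∃ (ι : Type) (_ : Fintype ι) (T : SimpleGraph ι) (β : ι → Set G.V),
    IsTreeDecomp G T β ∧ ∀ u, (β u).ncard ≤ k + 1

/-- The treewidth of `G`. -/
def treewidth (G : FGraph) : ℕ := sInf {k | twLE G k}

/-- The class property `Tw` of all graph classes with bounded treewidth. -/
def Tw : Set (Set FGraph) := {C | ∃ k : ℕ, ∀ G ∈ C, twLE G k}

end FGraph

/-- **Observation 15.** If every component of every graph of `C` has at most `s` vertices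
and every graph in `Gc` has a fractional `C`-complementary packing of thickness at most
`1/3`, then every graph in `Gc` has maximum degree at most `2s - 2`.  In particular, every
fractionally `Vs`-fragile class has bounded maximum degree. -/
theorem stmt8 :
    (∀ (Gc C : Set FGraph) (s : ℕ),
      (∀ G ∈ C, ∀ v : G.V, G.compSize v ≤ s) →
      (∀ G ∈ Gc, FGraph.FracPack G C ((1 : ℝ) / 3)) →
      ∀ G ∈ Gc, ∀ v : G.V, ((G.G.neighborSet v).ncard : ℤ) ≤ 2 * (s : ℤ) - 2) ∧
    (∀ Gc : Set FGraph, FGraph.FracFragile FGraph.Vs Gc → FGraph.BddMaxDeg Gc) := by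
  have main : ∀ (Gc C : Set FGraph) (s : ℕ),
      (∀ G ∈ C, ∀ v : G.V, G.compSize v ≤ s) →
      (∀ G ∈ Gc, FGraph.FracPack G C ((1 : ℝ) / 3)) →
      ∀ G ∈ Gc, ∀ v : G.V, ((G.G.neighborSet v).ncard : ℤ) ≤ 2 * (s : ℤ) - 2 := by
    intro Gc C s hC hW G hG v
    classical
    obtain ⟨π, hπ0, hπ1, hπC, hπth⟩ := hW G hG
    have hNfin : (G.G.neighborSet v).Finite := Set.toFinite _
    set N : Finset G.V := hNfin.toFinset with hNdef
    have hdcard : (G.G.neighborSet v).ncard = N.card :=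
      Set.ncard_eq_toFinset_card _ hNfin
    set d : ℕ := N.card with hddef
    have hvN : v ∉ N := by
      rw [hNdef, Set.Finite.mem_toFinset, SimpleGraph.mem_neighborSet]
      exact G.G.irrefl
    -- Key bound: for supported X not containing v, |N ∩ X| ≥ d + 1 - s.
    have key : ∀ X : Finset G.V, π X ≠ 0 → v ∉ X → d + 1 ≤ s + (N ∩ X).card := by
      intro X hne hv
      have hH : G.del (↑X : Set G.V) ∈ C := hπC X hne
      have hv' : v ∈ ((↑X : Set G.V)ᶜ) := hv
      have hcs : (G.del (↑X : Set G.V)).compSize ⟨v, hv'⟩ ≤ s := hC _ hH _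
      set H := G.del (↑X : Set G.V) with hHdef
      set v' : H.V := ⟨v, hv'⟩ with hv'def
      have hsu : ((H.G.connectedComponentMk v').supp).ncard ≤ s := hcs
      have hsub : (↑(insert v (N \ X)) : Set G.V) ⊆
          Subtype.val '' (H.G.connectedComponentMk v').supp := by
        intro u hu
        simp only [Finset.coe_insert, Set.mem_insert_iff, Finset.coe_sdiff,
          Set.mem_diff, Finset.mem_coe] at hu
        rcases hu with rfl | ⟨huN, huX⟩
        · exact ⟨v', (SimpleGraph.ConnectedComponent.mem_supp_iff _ _).mpr rfl, rfl⟩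
        · have huc : u ∈ ((↑X : Set G.V)ᶜ) := huX
          refine ⟨⟨u, huc⟩, ?_, rfl⟩
          have hadj : G.G.Adj v u := by
            have := huN
            rw [hNdef, Set.Finite.mem_toFinset] at this
            exact this
          have hadj' : H.G.Adj v' ⟨u, huc⟩ := hadj
          refine (SimpleGraph.ConnectedComponent.mem_supp_iff _ _).mpr ?_
          exact SimpleGraph.ConnectedComponent.sound hadj'.symm.reachable
      have hcard1 : (insert v (N \ X)).card = (N \ X).card + 1 := by
        rw [Finset.card_insert_of_notMem (fun h => hvN (Finset.mem_sdiff.mp h).1)]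
      have hcard2 : (insert v (N \ X)).card ≤ s := by
        calc (insert v (N \ X)).card
            = (↑(insert v (N \ X)) : Set G.V).ncard := (Set.ncard_coe_finset _).symm
          _ ≤ (Subtype.val '' (H.G.connectedComponentMk v').supp).ncard :=
              Set.ncard_le_ncard hsub (Set.toFinite _)
          _ = ((H.G.connectedComponentMk v').supp).ncard :=
              Set.ncard_image_of_injective _ Subtype.val_injective
          _ ≤ s := hsu
      have hsplit : (N ∩ X).card + (N \ X).card = N.card :=
        Finset.card_inter_add_card_sdiff N X
      omega
    -- double counting
    have swap : ∑ X : Finset G.V, π X * ((N ∩ X).card : ℝ) ≤ (d : ℝ) / 3 := by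
      have h1 : ∀ X : Finset G.V, π X * ((N ∩ X).card : ℝ)
          = ∑ u ∈ N, (if u ∈ X then π X else 0) := by
        intro X
        rw [Finset.sum_ite_mem N X (fun _ => π X)]
        simp [Finset.sum_const, mul_comm]
      calc ∑ X : Finset G.V, π X * ((N ∩ X).card : ℝ)
          = ∑ X : Finset G.V, ∑ u ∈ N, (if u ∈ X then π X else 0) := by
            exact Finset.sum_congr rfl fun X _ => h1 X
        _ = ∑ u ∈ N, ∑ X : Finset G.V, (if u ∈ X then π X else 0) :=
            Finset.sum_comm
        _ ≤ ∑ u ∈ N, (1 : ℝ) / 3 := by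
            refine Finset.sum_le_sum fun u _ => ?_
            have := hπth u
            rwa [Finset.sum_filter] at this
        _ = (d : ℝ) / 3 := by
            rw [Finset.sum_const, hddef]
            ring
    -- lower bound
    set a : ℝ := ∑ X ∈ Finset.univ.filter (fun X : Finset G.V => v ∈ X), π X with hadef
    have ha1 : a ≤ 1 / 3 := hπth v
    have ha0 : 0 ≤ a := Finset.sum_nonneg fun X _ => hπ0 X
    have hsplitsum : a + ∑ X ∈ Finset.univ.filter (fun X : Finset G.V => ¬ v ∈ X), π X
        = 1 := by
      rw [hadef, Finset.sum_filter_add_sum_filter_not]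
      exact hπ1
    have lower : (1 - a) * ((d : ℝ) + 1 - s)
        ≤ ∑ X : Finset G.V, π X * ((N ∩ X).card : ℝ) := by
      have h1 : (1 - a) * ((d : ℝ) + 1 - s)
          = ∑ X ∈ Finset.univ.filter (fun X : Finset G.V => ¬ v ∈ X),
              π X * ((d : ℝ) + 1 - s) := by
        rw [← Finset.sum_mul]
        have : ∑ X ∈ Finset.univ.filter (fun X : Finset G.V => ¬ v ∈ X), π X = 1 - a := by
          linarith
        rw [this]
      rw [h1]
      calc ∑ X ∈ Finset.univ.filter (fun X : Finset G.V => ¬ v ∈ X),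
              π X * ((d : ℝ) + 1 - s)
          ≤ ∑ X ∈ Finset.univ.filter (fun X : Finset G.V => ¬ v ∈ X),
              π X * ((N ∩ X).card : ℝ) := by
            refine Finset.sum_le_sum fun X hX => ?_
            rcases eq_or_ne (π X) 0 with h0 | h0
            · simp [h0]
            · have hvX : v ∉ X := (Finset.mem_filter.mp hX).2
              have := key X h0 hvX
              have hcard : ((d : ℝ) + 1 - s) ≤ ((N ∩ X).card : ℝ) := by
                have : (d : ℝ) + 1 ≤ (s : ℝ) + ((N ∩ X).card : ℝ) := by
                  exact_mod_cast this
                linarith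
              exact mul_le_mul_of_nonneg_left hcard (hπ0 X)
        _ ≤ ∑ X : Finset G.V, π X * ((N ∩ X).card : ℝ) := by
            refine Finset.sum_le_sum_of_subset_of_nonneg (Finset.filter_subset _ _)
              fun X _ _ => ?_
            exact mul_nonneg (hπ0 X) (by positivity)
    have final : (d : ℝ) ≤ 2 * (s : ℝ) - 2 := by
      have hd0 : (0 : ℝ) ≤ (d : ℝ) := Nat.cast_nonneg _
      nlinarith [mul_le_mul_of_nonneg_right ha1 (le_of_lt (by norm_num : (0:ℝ) < 1)),
        mul_self_nonneg ((d : ℝ) + 1 - s)]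
    rw [hdcard]
    exact_mod_cast final
  refine ⟨main, fun Gc h => ?_⟩
  obtain ⟨C, hCVs, hWit⟩ := h ((1 : ℝ) / 3) (by norm_num)
  obtain ⟨t, ht⟩ := hCVs
  refine ⟨2 * t, fun G hG v => ?_⟩
  have := main Gc C t ht hWit G hG v
  have h2 : ((G.G.neighborSet v).ncard : ℤ) ≤ 2 * (t : ℤ) := by linarith
  exact_mod_cast h2
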